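/- Let (A⊗V,μ_{A⊗V}) and (A⊗W,μ_{A⊗W}) be weak crossed products with preunits ν_V and ν_W. Suppose there exist morphisms γ:V→A⊗W and θ:W→A⊗V satisfying: ν_V=(μ_A⊗V)∘(A⊗θ)∘ν_W; θ=∇_{A⊗V}∘θ; ψ_W=(μ_A⊗W)∘(μ_A⊗γ)∘(A⊗ψ_V)∘(θ⊗A); σ_W=(μ_A⊗W)∘(A⊗γ)∘μ_{A⊗V}∘(θ⊗θ); and (μ_A⊗V)∘(A⊗θ)∘γ=∇_{A⊗V}∘(η_A⊗V). Then the morphisms T:=(μ_A⊗W)∘(A⊗γ):A⊗V→A⊗W and S:=(μ_A⊗V)∘(A⊗θ):A⊗W→A⊗V are left A-linear and satisfy T∘ν_V=ν_W, T∘μ_{A⊗V}=μ_{A⊗W}∘(T⊗T), S∘T=∇_{A⊗V}, and T∘S=∇_{A⊗W}. -/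

import Mathlib

open CategoryTheory MonoidalCategory

universe v u

namespace WeakCrossed

variable {C : Type u} [Category.{v} C] [MonoidalCategory C]

/-- The monoid axioms for a triple `(A, η, μ)` in a monoidal category. -/
def IsMon (A : C) (eta : 𝟙_ C ⟶ A) (mu : A ⊗ A ⟶ A) : Prop :=
  (eta ▷ A) ≫ mu = (λ_ A).hom ∧ (A ◁ eta) ≫ mu = (ρ_ A).hom ∧
    (mu ▷ A) ≫ mu = (α_ A A A).hom ≫ (A ◁ mu) ≫ mu

/-- The morphism `(μ_A ⊗ Y) ∘ (A ⊗ f) : (A ⊗ X) ⊗ Z ⟶ A ⊗ Y` for `f : X ⊗ Z ⟶ A ⊗ Y`. -/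
def phi (A : C) {X Z Y : C} (mu : A ⊗ A ⟶ A) (f : X ⊗ Z ⟶ A ⊗ Y) :
    (A ⊗ X) ⊗ Z ⟶ A ⊗ Y :=
  (α_ A X Z).hom ≫ (A ◁ f) ≫ (α_ A A Y).inv ≫ (mu ▷ Y)

/-- The measuring condition `(μ_A ⊗ V) ∘ (A ⊗ ψ) ∘ (ψ ⊗ A) = ψ ∘ (V ⊗ μ_A)`. -/
def Measuring (A V : C) (mu : A ⊗ A ⟶ A) (psi : V ⊗ A ⟶ A ⊗ V) : Prop :=
  (psi ▷ A) ≫ phi A mu psi = (α_ V A A).hom ≫ (V ◁ mu) ≫ psi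

/-- The idempotent `∇_{A⊗V} = (μ_A ⊗ V) ∘ (A ⊗ ψ) ∘ (A ⊗ V ⊗ η_A)`. -/
def nabla (A V : C) (eta : 𝟙_ C ⟶ A) (mu : A ⊗ A ⟶ A) (psi : V ⊗ A ⟶ A ⊗ V) :
    A ⊗ V ⟶ A ⊗ V :=
  (ρ_ (A ⊗ V)).inv ≫ ((A ⊗ V) ◁ eta) ≫ phi A mu psi

/-- The twisted condition
`(μ_A ⊗ V) ∘ (A ⊗ ψ) ∘ (σ ⊗ A) = (μ_A ⊗ V) ∘ (A ⊗ σ) ∘ (ψ ⊗ V) ∘ (V ⊗ ψ)`. -/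
def Twisted (A V : C) (mu : A ⊗ A ⟶ A) (psi : V ⊗ A ⟶ A ⊗ V)
    (sig : V ⊗ V ⟶ A ⊗ V) : Prop :=
  (sig ▷ A) ≫ phi A mu psi =
    (α_ V V A).hom ≫ (V ◁ psi) ≫ (α_ V A V).inv ≫ (psi ▷ V) ≫ phi A mu sig

/-- The cocycle condition
`(μ_A ⊗ V) ∘ (A ⊗ σ) ∘ (σ ⊗ V) = (μ_A ⊗ V) ∘ (A ⊗ σ) ∘ (ψ ⊗ V) ∘ (V ⊗ σ)`. -/
def Cocycle (A V : C) (mu : A ⊗ A ⟶ A) (psi : V ⊗ A ⟶ A ⊗ V)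
    (sig : V ⊗ V ⟶ A ⊗ V) : Prop :=
  (sig ▷ V) ≫ phi A mu sig =
    (α_ V V V).hom ≫ (V ◁ sig) ≫ (α_ V A V).inv ≫ (psi ▷ V) ≫ phi A mu sig

/-- The weak crossed product multiplication
`μ_{A⊗V} = (μ_A ⊗ V) ∘ (μ_A ⊗ σ) ∘ (A ⊗ ψ ⊗ V)`. -/
def prodAV (A V : C) (mu : A ⊗ A ⟶ A) (psi : V ⊗ A ⟶ A ⊗ V)
    (sig : V ⊗ V ⟶ A ⊗ V) : (A ⊗ V) ⊗ (A ⊗ V) ⟶ A ⊗ V :=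
  (α_ A V (A ⊗ V)).hom ≫ (A ◁ ((α_ V A V).inv ≫ (psi ▷ V) ≫ (α_ A V V).hom)) ≫
    (α_ A A (V ⊗ V)).inv ≫ (mu ⊗ₘ sig) ≫ (α_ A A V).inv ≫ (mu ▷ V)

/-- The morphism `η_A ⊗ V : V ⟶ A ⊗ V`. -/
def etaT (A V : C) (eta : 𝟙_ C ⟶ A) : V ⟶ A ⊗ V := (λ_ V).inv ≫ (eta ▷ V)

/-- The morphism `β_ν = (μ_A ⊗ V) ∘ (A ⊗ ν) : A ⟶ A ⊗ V`. -/
def beta (A V : C) (mu : A ⊗ A ⟶ A) (nu : 𝟙_ C ⟶ A ⊗ V) : A ⟶ A ⊗ V :=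
  (ρ_ A).inv ≫ (A ◁ nu) ≫ (α_ A A V).inv ≫ (mu ▷ V)

/-- Preunit condition (pre1):
`(μ_A ⊗ V) ∘ (A ⊗ σ) ∘ (ψ ⊗ V) ∘ (V ⊗ ν) = ∇_{A⊗V} ∘ (η_A ⊗ V)`. -/
def Pre1 (A V : C) (eta : 𝟙_ C ⟶ A) (mu : A ⊗ A ⟶ A) (psi : V ⊗ A ⟶ A ⊗ V)
    (sig : V ⊗ V ⟶ A ⊗ V) (nu : 𝟙_ C ⟶ A ⊗ V) : Prop :=
  (ρ_ V).inv ≫ (V ◁ nu) ≫ (α_ V A V).inv ≫ (psi ▷ V) ≫ phi A mu sig =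
    etaT A V eta ≫ nabla A V eta mu psi

/-- Preunit condition (pre2):
`(μ_A ⊗ V) ∘ (A ⊗ σ) ∘ (ν ⊗ V) = ∇_{A⊗V} ∘ (η_A ⊗ V)`. -/
def Pre2 (A V : C) (eta : 𝟙_ C ⟶ A) (mu : A ⊗ A ⟶ A) (psi : V ⊗ A ⟶ A ⊗ V)
    (sig : V ⊗ V ⟶ A ⊗ V) (nu : 𝟙_ C ⟶ A ⊗ V) : Prop :=
  (λ_ V).inv ≫ (nu ▷ V) ≫ phi A mu sig = etaT A V eta ≫ nabla A V eta mu psi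

/-- Preunit condition (pre3): `(μ_A ⊗ V) ∘ (A ⊗ ψ) ∘ (ν ⊗ A) = β_ν`. -/
def Pre3 (A V : C) (mu : A ⊗ A ⟶ A) (psi : V ⊗ A ⟶ A ⊗ V)
    (nu : 𝟙_ C ⟶ A ⊗ V) : Prop :=
  (λ_ A).inv ≫ (nu ▷ A) ≫ phi A mu psi = beta A V mu nu

/-- `(A ⊗ V, μ_{A⊗V})` is a weak crossed product: measuring, twisted and cocycle
conditions hold and `∇_{A⊗V} ∘ σ = σ`. -/
def WCP (A V : C) (eta : 𝟙_ C ⟶ A) (mu : A ⊗ A ⟶ A) (psi : V ⊗ A ⟶ A ⊗ V)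
    (sig : V ⊗ V ⟶ A ⊗ V) : Prop :=
  Measuring A V mu psi ∧ Twisted A V mu psi sig ∧ Cocycle A V mu psi sig ∧
    sig ≫ nabla A V eta mu psi = sig

/-- `(A ⊗ V, μ_{A⊗V})` is a weak crossed product with preunit `ν`. -/
def WCPpre (A V : C) (eta : 𝟙_ C ⟶ A) (mu : A ⊗ A ⟶ A) (psi : V ⊗ A ⟶ A ⊗ V)
    (sig : V ⊗ V ⟶ A ⊗ V) (nu : 𝟙_ C ⟶ A ⊗ V) : Prop :=
  WCP A V eta mu psi sig ∧ Pre1 A V eta mu psi sig nu ∧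
    Pre2 A V eta mu psi sig nu ∧ Pre3 A V mu psi nu

/-- `(μ_A ⊗ Y) ∘ (A ⊗ γ) : A ⊗ X ⟶ A ⊗ Y` for `γ : X ⟶ A ⊗ Y`. -/
def tmap (A : C) {X Y : C} (mu : A ⊗ A ⟶ A) (g : X ⟶ A ⊗ Y) : A ⊗ X ⟶ A ⊗ Y :=
  (A ◁ g) ≫ (α_ A A Y).inv ≫ (mu ▷ Y)

/-- Left `A`-linearity of `T : A ⊗ X ⟶ A ⊗ Y`:
`T ∘ (μ_A ⊗ X) = (μ_A ⊗ Y) ∘ (A ⊗ T)`. -/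
def LeftLin (A : C) {X Y : C} (mu : A ⊗ A ⟶ A) (T : A ⊗ X ⟶ A ⊗ Y) : Prop :=
  (mu ▷ X) ≫ T = (α_ A A X).hom ≫ (A ◁ T) ≫ (α_ A A Y).inv ≫ (mu ▷ Y)

/-- `ν` is a preunit for the associative product `m` on `X`. -/
def IsPreunit {X : C} (m : X ⊗ X ⟶ X) (nu : 𝟙_ C ⟶ X) : Prop :=
  (ρ_ X).inv ≫ (X ◁ nu) ≫ m = (λ_ X).inv ≫ (nu ▷ X) ≫ m ∧
  (ρ_ X).inv ≫ (X ◁ nu) ≫ m =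
    (ρ_ X).inv ≫ (X ◁ ((λ_ (𝟙_ C)).inv ≫ (nu ⊗ₘ nu) ≫ m)) ≫ m

/-- Brzeziński normalization conditions: `ψ ∘ (η_V ⊗ A) = A ⊗ η_V`,
`ψ ∘ (V ⊗ η_A) = η_A ⊗ V`, `σ ∘ (η_V ⊗ V) = σ ∘ (V ⊗ η_V) = η_A ⊗ V`. -/
def BrzNorm (A V : C) (eta : 𝟙_ C ⟶ A) (etaV : 𝟙_ C ⟶ V) (psi : V ⊗ A ⟶ A ⊗ V)
    (sig : V ⊗ V ⟶ A ⊗ V) : Prop :=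
  (λ_ A).inv ≫ (etaV ▷ A) ≫ psi = (ρ_ A).inv ≫ (A ◁ etaV) ∧
  (ρ_ V).inv ≫ (V ◁ eta) ≫ psi = (λ_ V).inv ≫ (eta ▷ V) ∧
  (λ_ V).inv ≫ (etaV ▷ V) ≫ sig = (λ_ V).inv ≫ (eta ▷ V) ∧
  (ρ_ V).inv ≫ (V ◁ etaV) ≫ sig = (λ_ V).inv ≫ (eta ▷ V)


section Aux

variable {A : C} {eta : 𝟙_ C ⟶ A} {mu : A ⊗ A ⟶ A}

theorem tmap_lin (hA : IsMon A eta mu) {X Y : C} (f : X ⟶ A ⊗ Y) :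
    (mu ▷ X) ≫ tmap A mu f =
      (α_ A A X).hom ≫ (A ◁ tmap A mu f) ≫ (α_ A A Y).inv ≫ (mu ▷ Y) := by
  simp only [tmap, MonoidalCategory.whiskerLeft_comp, Category.assoc]
  slice_lhs 1 2 => rw [← whisker_exchange]
  slice_lhs 2 3 => rw [associator_inv_naturality_left]
  slice_lhs 3 4 => rw [← comp_whiskerRight, hA.2.2]
  slice_rhs 4 5 => rw [associator_inv_naturality_middle]
  simp only [comp_whiskerRight, Category.assoc]
  monoidal

theorem tmap_comp (hA : IsMon A eta mu) {X Y Z : C} (f : X ⟶ A ⊗ Y) (h : Y ⟶ A ⊗ Z) :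
    tmap A mu f ≫ tmap A mu h = tmap A mu (f ≫ tmap A mu h) := by
  have hl := tmap_lin hA h
  calc tmap A mu f ≫ tmap A mu h
      = (A ◁ f) ≫ (α_ A A Y).inv ≫ ((mu ▷ Y) ≫ tmap A mu h) := by
        simp [tmap]
    _ = (A ◁ f) ≫ (α_ A A Y).inv ≫ ((α_ A A Y).hom ≫ (A ◁ tmap A mu h) ≫
          (α_ A A Z).inv ≫ (mu ▷ Z)) := by rw [hl]
    _ = tmap A mu (f ≫ tmap A mu h) := by simp [tmap]

theorem etaT_tmap (hA : IsMon A eta mu) {X Y : C} (f : X ⟶ A ⊗ Y) :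
    etaT A X eta ≫ tmap A mu f = f := by
  simp only [etaT, tmap, Category.assoc]
  slice_lhs 2 3 => rw [← whisker_exchange]
  slice_lhs 3 4 => rw [associator_inv_naturality_left]
  slice_lhs 4 5 => rw [← comp_whiskerRight, hA.1]
  try simp only [Category.assoc]
  monoidal

theorem etaT_phi (hA : IsMon A eta mu) {X Z Y : C} (f : X ⊗ Z ⟶ A ⊗ Y) :
    (etaT A X eta ▷ Z) ≫ phi A mu f = f := by
  simp only [etaT, phi, comp_whiskerRight, Category.assoc]
  slice_lhs 2 3 => rw [associator_naturality_left]
  slice_lhs 3 4 => rw [← whisker_exchange]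
  slice_lhs 4 5 => rw [associator_inv_naturality_left]
  slice_lhs 5 6 => rw [← comp_whiskerRight, hA.1]
  try simp only [Category.assoc]
  monoidal

theorem phi_lin (hA : IsMon A eta mu) {X Z Y : C} (f : X ⊗ Z ⟶ A ⊗ Y) :
    ((mu ▷ X) ▷ Z) ≫ phi A mu f =
      ((α_ A A X).hom ▷ Z) ≫ (α_ A (A ⊗ X) Z).hom ≫ (A ◁ phi A mu f) ≫
        (α_ A A Y).inv ≫ (mu ▷ Y) := by
  simp only [phi, MonoidalCategory.whiskerLeft_comp, Category.assoc]
  slice_lhs 1 2 => rw [associator_naturality_left]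
  slice_lhs 2 3 => rw [← whisker_exchange]
  slice_lhs 3 4 => rw [associator_inv_naturality_left]
  slice_lhs 4 5 => rw [← comp_whiskerRight, hA.2.2]
  slice_rhs 6 7 => rw [associator_inv_naturality_middle]
  simp only [comp_whiskerRight, Category.assoc]
  monoidal

theorem phi_tmap (hA : IsMon A eta mu) {X Z Y B : C} (f : X ⊗ Z ⟶ A ⊗ Y)
    (h : Y ⟶ A ⊗ B) : phi A mu f ≫ tmap A mu h = phi A mu (f ≫ tmap A mu h) := by
  have hl := tmap_lin hA h
  calc phi A mu f ≫ tmap A mu h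
      = (α_ A X Z).hom ≫ (A ◁ f) ≫ (α_ A A Y).inv ≫ ((mu ▷ Y) ≫ tmap A mu h) := by
        simp [phi]
    _ = (α_ A X Z).hom ≫ (A ◁ f) ≫ (α_ A A Y).inv ≫ ((α_ A A Y).hom ≫
          (A ◁ tmap A mu h) ≫ (α_ A A B).inv ≫ (mu ▷ B)) := by rw [hl]
    _ = phi A mu (f ≫ tmap A mu h) := by simp [phi]

theorem whisker_phi {X Z Z' Y : C} (f : X ⊗ Z' ⟶ A ⊗ Y) (h : Z ⟶ Z') :
    ((A ⊗ X) ◁ h) ≫ phi A mu f = phi A mu ((X ◁ h) ≫ f) := by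
  simp only [phi, MonoidalCategory.whiskerLeft_comp]
  slice_lhs 1 2 => rw [associator_naturality_right]
  simp [Category.assoc]

theorem pre_phi {X X' Z Y : C} (e : X ⟶ X') (f : X' ⊗ Z ⟶ A ⊗ Y) :
    ((A ◁ e) ▷ Z) ≫ phi A mu f = phi A mu ((e ▷ Z) ≫ f) := by
  simp only [phi, MonoidalCategory.whiskerLeft_comp]
  slice_lhs 1 2 => rw [associator_naturality_middle]
  simp [Category.assoc]

theorem tmap_phi (hA : IsMon A eta mu) {X X' Z Y : C} (q : X ⟶ A ⊗ X')
    (f : X' ⊗ Z ⟶ A ⊗ Y) :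
    (tmap A mu q ▷ Z) ≫ phi A mu f = phi A mu ((q ▷ Z) ≫ phi A mu f) := by
  have hl := phi_lin hA f
  calc (tmap A mu q ▷ Z) ≫ phi A mu f
      = ((A ◁ q) ▷ Z) ≫ ((α_ A A X').inv ▷ Z) ≫ (((mu ▷ X') ▷ Z) ≫ phi A mu f) := by
        simp [tmap]
    _ = ((A ◁ q) ▷ Z) ≫ ((α_ A A X').inv ▷ Z) ≫ (((α_ A A X').hom ▷ Z) ≫
          (α_ A (A ⊗ X') Z).hom ≫ (A ◁ phi A mu f) ≫ (α_ A A Y).inv ≫ (mu ▷ Y)) := by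
        rw [hl]
    _ = ((A ◁ q) ▷ Z) ≫ (α_ A (A ⊗ X') Z).hom ≫ (A ◁ phi A mu f) ≫
          (α_ A A Y).inv ≫ (mu ▷ Y) := by simp
    _ = (α_ A X Z).hom ≫ (A ◁ (q ▷ Z)) ≫ (A ◁ phi A mu f) ≫
          (α_ A A Y).inv ≫ (mu ▷ Y) := by
        slice_lhs 1 2 => rw [associator_naturality_middle]
        simp [Category.assoc]
    _ = phi A mu ((q ▷ Z) ≫ phi A mu f) := by simp [phi]

theorem phi_phi (hA : IsMon A eta mu) {X B X' Z Y : C} (q : X ⊗ B ⟶ A ⊗ X')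
    (f : X' ⊗ Z ⟶ A ⊗ Y) :
    (phi A mu q ▷ Z) ≫ phi A mu f =
      (α_ (A ⊗ X) B Z).hom ≫ phi A mu ((α_ X B Z).inv ≫ (q ▷ Z) ≫ phi A mu f) := by
  have hl := phi_lin hA f
  calc (phi A mu q ▷ Z) ≫ phi A mu f
      = ((α_ A X B).hom ▷ Z) ≫ ((A ◁ q) ▷ Z) ≫ ((α_ A A X').inv ▷ Z) ≫
          (((mu ▷ X') ▷ Z) ≫ phi A mu f) := by simp [phi]
    _ = ((α_ A X B).hom ▷ Z) ≫ ((A ◁ q) ▷ Z) ≫ ((α_ A A X').inv ▷ Z) ≫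
          (((α_ A A X').hom ▷ Z) ≫ (α_ A (A ⊗ X') Z).hom ≫ (A ◁ phi A mu f) ≫
            (α_ A A Y).inv ≫ (mu ▷ Y)) := by rw [hl]
    _ = ((α_ A X B).hom ▷ Z) ≫ ((A ◁ q) ▷ Z) ≫ (α_ A (A ⊗ X') Z).hom ≫
          (A ◁ phi A mu f) ≫ (α_ A A Y).inv ≫ (mu ▷ Y) := by simp
    _ = (α_ (A ⊗ X) B Z).hom ≫ phi A mu ((α_ X B Z).inv ≫ (q ▷ Z) ≫ phi A mu f) := by
        simp only [phi, MonoidalCategory.whiskerLeft_comp, Category.assoc]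
        slice_lhs 2 3 => rw [associator_naturality_middle]
        try simp only [Category.assoc]
        monoidal

theorem phi_phi2 (hA : IsMon A eta mu) {X Z Y : C} (f : X ⊗ Z ⟶ A ⊗ Y) :
    phi A mu (phi A mu f) =
      ((α_ A A X).inv ▷ Z) ≫ ((mu ▷ X) ▷ Z) ≫ phi A mu f := by
  have hl := phi_lin hA f
  rw [hl]
  simp only [phi]
  monoidal

theorem prodAV_eq_phi (hA : IsMon A eta mu) {V : C} (psi : V ⊗ A ⟶ A ⊗ V)
    (sig : V ⊗ V ⟶ A ⊗ V) :
    prodAV A V mu psi sig =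
      phi A mu ((α_ V A V).inv ≫ (psi ▷ V) ≫ phi A mu sig) := by
  simp only [prodAV, phi, MonoidalCategory.tensorHom_def, MonoidalCategory.whiskerLeft_comp,
    comp_whiskerRight, Category.assoc]
  slice_lhs 6 7 => rw [← whisker_exchange]
  slice_lhs 7 8 => rw [associator_inv_naturality_left]
  slice_lhs 8 9 => rw [← comp_whiskerRight, hA.2.2]
  slice_rhs 7 8 => rw [associator_inv_naturality_middle]
  simp only [comp_whiskerRight, Category.assoc]
  monoidal

theorem nabla_eq_tmap {V : C} (psi : V ⊗ A ⟶ A ⊗ V) :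
    nabla A V eta mu psi = tmap A mu ((ρ_ V).inv ≫ (V ◁ eta) ≫ psi) := by
  simp only [nabla, tmap, phi, MonoidalCategory.whiskerLeft_comp, Category.assoc]
  slice_lhs 2 3 => rw [associator_naturality_right]
  monoidal

theorem nu_nabla (hA : IsMon A eta mu) {V : C} {psi : V ⊗ A ⟶ A ⊗ V}
    {nu : 𝟙_ C ⟶ A ⊗ V} (hp : Pre3 A V mu psi nu) :
    nu ≫ nabla A V eta mu psi = nu := by
  have h1 : nu ≫ nabla A V eta mu psi = eta ≫ (λ_ A).inv ≫ (nu ▷ A) ≫ phi A mu psi := by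
    simp only [nabla]
    slice_lhs 1 2 => rw [rightUnitor_inv_naturality]
    slice_lhs 2 3 => rw [← whisker_exchange]
    slice_rhs 1 2 => rw [leftUnitor_inv_naturality]
    rw [unitors_inv_equal]
    simp
  rw [h1]
  have h2 : (λ_ A).inv ≫ (nu ▷ A) ≫ phi A mu psi = beta A V mu nu := hp
  rw [h2]
  simp only [beta]
  slice_lhs 1 2 => rw [rightUnitor_inv_naturality]
  slice_lhs 2 3 => rw [← whisker_exchange]
  slice_lhs 3 4 => rw [associator_inv_naturality_left]
  slice_lhs 4 5 => rw [← comp_whiskerRight, hA.1]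
  monoidal

theorem phi_ker (hA : IsMon A eta mu) {V B Y : C} (psi : V ⊗ A ⟶ A ⊗ V)
    (r : V ⊗ B ⟶ A ⊗ Y) :
    phi A mu ((α_ V A B).inv ≫ (psi ▷ B) ≫ phi A mu r) =
      (α_ (A ⊗ V) A B).inv ≫ (phi A mu psi ▷ B) ≫ phi A mu r := by
  rw [phi_phi hA psi r]
  simp

theorem measuring' {V : C} {psi : V ⊗ A ⟶ A ⊗ V} (hm : Measuring A V mu psi) :
    (V ◁ mu) ≫ psi = (α_ V A A).inv ≫ (psi ▷ A) ≫ phi A mu psi := by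
  rw [hm]; simp

theorem Mass (hA : IsMon A eta mu) {V B Y : C} {psi : V ⊗ A ⟶ A ⊗ V}
    (hm : Measuring A V mu psi) (r : V ⊗ B ⟶ A ⊗ Y) :
    (V ◁ ((α_ A A B).inv ≫ (mu ▷ B))) ≫ ((α_ V A B).inv ≫ (psi ▷ B) ≫ phi A mu r) =
      (α_ V A (A ⊗ B)).inv ≫ (psi ▷ (A ⊗ B)) ≫
        phi A mu ((α_ V A B).inv ≫ (psi ▷ B) ≫ phi A mu r) := by
  rw [phi_ker hA psi r]
  simp only [MonoidalCategory.whiskerLeft_comp, Category.assoc]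
  slice_lhs 2 3 => rw [associator_inv_naturality_middle]
  slice_lhs 3 4 => rw [← comp_whiskerRight, measuring' hm]
  simp only [comp_whiskerRight, Category.assoc]
  monoidal

theorem M2core (hA : IsMon A eta mu) {V : C} {psi : V ⊗ A ⟶ A ⊗ V}
    (hm : Measuring A V mu psi) :
    (nabla A V eta mu psi ▷ A) ≫ phi A mu psi = phi A mu psi := by
  simp only [nabla, comp_whiskerRight, Category.assoc]
  rw [phi_phi hA psi psi]
  rw [← measuring' hm]
  rw [← whisker_phi]
  slice_lhs 2 3 => rw [associator_naturality_middle]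
  slice_lhs 3 4 => rw [← MonoidalCategory.whiskerLeft_comp, hA.1]
  monoidal

theorem M2gen (hA : IsMon A eta mu) {V B Y : C} {psi : V ⊗ A ⟶ A ⊗ V}
    (hm : Measuring A V mu psi) (r : V ⊗ B ⟶ A ⊗ Y) :
    (nabla A V eta mu psi ▷ (A ⊗ B)) ≫
        phi A mu ((α_ V A B).inv ≫ (psi ▷ B) ≫ phi A mu r) =
      phi A mu ((α_ V A B).inv ≫ (psi ▷ B) ≫ phi A mu r) := by
  rw [phi_ker hA psi r]
  slice_lhs 1 2 => rw [associator_inv_naturality_left]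
  slice_lhs 2 3 => rw [← comp_whiskerRight, M2core hA hm]
  try simp

theorem M3gen (hA : IsMon A eta mu) {V : C} {psi : V ⊗ A ⟶ A ⊗ V}
    {sig : V ⊗ V ⟶ A ⊗ V} (ht : Twisted A V mu psi sig)
    (hns : sig ≫ nabla A V eta mu psi = sig) :
    (V ◁ (etaT A V eta ≫ nabla A V eta mu psi)) ≫
      ((α_ V A V).inv ≫ (psi ▷ V) ≫ phi A mu sig) = sig := by
  have hf0 : etaT A V eta ≫ nabla A V eta mu psi = (ρ_ V).inv ≫ (V ◁ eta) ≫ psi := by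
    rw [nabla_eq_tmap, etaT_tmap hA]
  rw [hf0]
  have ht' : (V ◁ psi) ≫ (α_ V A V).inv ≫ (psi ▷ V) ≫ phi A mu sig =
      (α_ V V A).inv ≫ (sig ▷ A) ≫ phi A mu psi := by
    rw [ht]; simp
  simp only [MonoidalCategory.whiskerLeft_comp, Category.assoc]
  rw [ht']
  slice_lhs 2 3 => rw [associator_inv_naturality_right]
  slice_lhs 3 4 => rw [whisker_exchange]
  have hstr : (V ◁ (ρ_ V).inv) ≫ (α_ V V (𝟙_ C)).inv = (ρ_ (V ⊗ V)).inv := by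
    monoidal_coherence
  slice_lhs 1 2 => rw [hstr]
  slice_lhs 1 2 => rw [← rightUnitor_inv_naturality]
  simpa only [nabla, Category.assoc] using hns

end Aux

/-- Theorem, (iii) ⟹ (ii): from `γ`, `θ` one obtains left
`A`-linear `T = (μ_A⊗W)∘(A⊗γ)` and `S = (μ_A⊗V)∘(A⊗θ)` with the required
properties. -/
theorem gamma_theta_gives_TS (A V W : C) (eta : 𝟙_ C ⟶ A) (mu : A ⊗ A ⟶ A)
    (hA : IsMon A eta mu)
    (psiV : V ⊗ A ⟶ A ⊗ V) (sigV : V ⊗ V ⟶ A ⊗ V) (nuV : 𝟙_ C ⟶ A ⊗ V)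
    (psiW : W ⊗ A ⟶ A ⊗ W) (sigW : W ⊗ W ⟶ A ⊗ W) (nuW : 𝟙_ C ⟶ A ⊗ W)
    (hV : WCPpre A V eta mu psiV sigV nuV) (hW : WCPpre A W eta mu psiW sigW nuW)
    (g : V ⟶ A ⊗ W) (th : W ⟶ A ⊗ V)
    (h1 : nuV = nuW ≫ tmap A mu th)
    (h2 : th = th ≫ nabla A V eta mu psiV)
    (h3 : psiW = (th ▷ A) ≫ (α_ A V A).hom ≫ (A ◁ psiV) ≫ (α_ A A V).inv ≫
      (mu ⊗ₘ g) ≫ (α_ A A W).inv ≫ (mu ▷ W))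
    (h4 : sigW = (th ⊗ₘ th) ≫ prodAV A V mu psiV sigV ≫ tmap A mu g)
    (h5 : g ≫ tmap A mu th = etaT A V eta ≫ nabla A V eta mu psiV) :
    LeftLin A mu (tmap A mu g) ∧ LeftLin A mu (tmap A mu th) ∧
    nuV ≫ tmap A mu g = nuW ∧
    prodAV A V mu psiV sigV ≫ tmap A mu g =
      (tmap A mu g ⊗ₘ tmap A mu g) ≫ prodAV A W mu psiW sigW ∧
    tmap A mu g ≫ tmap A mu th = nabla A V eta mu psiV ∧
    tmap A mu th ≫ tmap A mu g = nabla A W eta mu psiW := by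
  obtain ⟨⟨hmV, htwV, _hcoV, hnsV⟩, _pre1V, _pre2V, _pre3V⟩ := hV
  obtain ⟨⟨hmW, _htwW, _hcoW, _hnsW⟩, _pre1W, _pre2W, pre3W⟩ := hW
  have h3' : psiW = (th ▷ A) ≫ phi A mu psiV ≫ tmap A mu g := by
    rw [h3, MonoidalCategory.tensorHom_def]
    simp only [phi, tmap, MonoidalCategory.whiskerLeft_comp, comp_whiskerRight,
      Category.assoc]
  have part5 : tmap A mu g ≫ tmap A mu th = nabla A V eta mu psiV := by
    rw [tmap_comp hA, h5, nabla_eq_tmap, etaT_tmap hA]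
  have hth : th ≫ tmap A mu g = (ρ_ W).inv ≫ (W ◁ eta) ≫ psiW := by
    rw [h3']
    slice_rhs 2 3 => rw [whisker_exchange]
    slice_rhs 1 2 => rw [← rightUnitor_inv_naturality]
    have hn : (ρ_ (A ⊗ V)).inv ≫ ((A ⊗ V) ◁ eta) ≫ phi A mu psiV ≫ tmap A mu g =
        nabla A V eta mu psiV ≫ tmap A mu g := by
      simp [nabla]
    simp only [Category.assoc]
    rw [hn, ← Category.assoc, ← h2]
  have part6 : tmap A mu th ≫ tmap A mu g = nabla A W eta mu psiW := by
    rw [tmap_comp hA, hth, ← nabla_eq_tmap]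
  have part3 : nuV ≫ tmap A mu g = nuW := by
    rw [h1, Category.assoc, part6, nu_nabla hA pre3W]
  have hSA : phi A mu sigW = (tmap A mu th ▷ W) ≫
      phi A mu (V ◁ th ≫ (α_ V A V).inv ≫ psiV ▷ V ≫
        phi A mu (sigV ≫ tmap A mu g)) := by
    rw [h4, prodAV_eq_phi hA, MonoidalCategory.tensorHom_def]
    simp only [Category.assoc]
    rw [phi_tmap hA]
    simp only [Category.assoc]
    rw [phi_tmap hA]
    rw [whisker_phi]
    rw [← pre_phi]
    rw [phi_phi2 hA]
    simp only [tmap, comp_whiskerRight, Category.assoc]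
  have hNk0 : (nabla A V eta mu psiV ▷ W) ≫
      phi A mu (V ◁ th ≫ (α_ V A V).inv ≫ psiV ▷ V ≫
        phi A mu (sigV ≫ tmap A mu g)) =
      phi A mu (V ◁ th ≫ (α_ V A V).inv ≫ psiV ▷ V ≫
        phi A mu (sigV ≫ tmap A mu g)) := by
    rw [← whisker_phi]
    rw [← whisker_exchange_assoc]
    rw [M2gen hA hmV (sigV ≫ tmap A mu g)]
  have hR4 : (W ◁ tmap A mu g) ≫ (α_ W A W).inv ≫ (psiW ▷ W) ≫ phi A mu sigW =
      (α_ W A V).inv ≫ (psiW ▷ V) ≫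
        phi A mu ((W ◁ g) ≫ (α_ W A W).inv ≫ (psiW ▷ W) ≫ phi A mu sigW) := by
    have hT : (W ◁ tmap A mu g) =
        (W ◁ (A ◁ g)) ≫ (W ◁ ((α_ A A W).inv ≫ (mu ▷ W))) := by
      simp [tmap, MonoidalCategory.whiskerLeft_comp]
    rw [hT]
    simp only [Category.assoc]
    rw [Mass hA hmW sigW]
    rw [← whisker_phi]
    rw [← whisker_exchange_assoc]
    rw [associator_inv_naturality_right_assoc]
  have hR5 : (W ◁ g) ≫ (α_ W A W).inv ≫ (psiW ▷ W) ≫ phi A mu sigW =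
      (W ◁ g) ≫ (α_ W A W).inv ≫ ((th ▷ A) ▷ W) ≫ (phi A mu psiV ▷ W) ≫
        phi A mu (V ◁ th ≫ (α_ V A V).inv ≫ psiV ▷ V ≫
          phi A mu (sigV ≫ tmap A mu g)) := by
    rw [hSA, h3']
    simp only [comp_whiskerRight, Category.assoc]
    rw [← comp_whiskerRight_assoc (tmap A mu g) (tmap A mu th)]
    rw [part5]
    rw [hNk0]
  have hInner : (W ◁ tmap A mu g) ≫ (α_ W A W).inv ≫ (psiW ▷ W) ≫ phi A mu sigW =
      (th ▷ (A ⊗ V)) ≫ phi A mu ((α_ V A V).inv ≫ (psiV ▷ V) ≫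
        phi A mu ((g ▷ V) ≫ phi A mu ((W ◁ g) ≫ (α_ W A W).inv ≫ ((th ▷ A) ▷ W) ≫
          (phi A mu psiV ▷ W) ≫
          phi A mu (V ◁ th ≫ (α_ V A V).inv ≫ psiV ▷ V ≫
            phi A mu (sigV ≫ tmap A mu g))))) := by
    rw [hR4]
    rw [hR5]
    rw [h3']
    simp only [comp_whiskerRight, Category.assoc]
    rw [tmap_phi hA]
    rw [phi_phi hA]
    rw [associator_naturality_left_assoc]
    simp only [Category.assoc, Iso.inv_hom_id_assoc]
  have hPhiInner : phi A mu ((W ◁ tmap A mu g) ≫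
      (α_ W A W).inv ≫ (psiW ▷ W) ≫ phi A mu sigW) =
      (tmap A mu th ▷ (A ⊗ V)) ≫ phi A mu ((α_ V A V).inv ≫ (psiV ▷ V) ≫
        phi A mu ((g ▷ V) ≫ phi A mu ((W ◁ g) ≫ (α_ W A W).inv ≫ ((th ▷ A) ▷ W) ≫
          (phi A mu psiV ▷ W) ≫
          phi A mu (V ◁ th ≫ (α_ V A V).inv ≫ psiV ▷ V ≫
            phi A mu (sigV ≫ tmap A mu g))))) := by
    rw [hInner, ← pre_phi, phi_phi2 hA]
    simp only [tmap, comp_whiskerRight, Category.assoc]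
  have hdia : (g ▷ V) ≫ phi A mu ((W ◁ g) ≫ (α_ W A W).inv ≫ ((th ▷ A) ▷ W) ≫
      (phi A mu psiV ▷ W) ≫
      phi A mu (V ◁ th ≫ (α_ V A V).inv ≫ psiV ▷ V ≫
        phi A mu (sigV ≫ tmap A mu g))) = sigV ≫ tmap A mu g := by
    rw [← whisker_phi]
    rw [phi_phi hA]
    rw [associator_naturality_left_assoc]
    simp only [Category.assoc, Iso.inv_hom_id_assoc]
    rw [← pre_phi, phi_phi2 hA]
    rw [← whisker_exchange_assoc]
    have hS : ((A ◁ th) ▷ (A ⊗ W)) ≫ ((α_ A A V).inv ▷ (A ⊗ W)) ≫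
        ((mu ▷ V) ▷ (A ⊗ W)) = (tmap A mu th ▷ (A ⊗ W)) := by
      simp [tmap, comp_whiskerRight]
    rw [reassoc_of% hS]
    rw [← comp_whiskerRight_assoc g (tmap A mu th)]
    rw [h5]
    rw [comp_whiskerRight]
    simp only [Category.assoc]
    rw [M2gen hA hmV]
    rw [etaT_phi hA]
    rw [← whisker_phi]
    rw [← whisker_exchange_assoc]
    have hMass' : (psiV ▷ (A ⊗ V)) ≫
        phi A mu ((α_ V A V).inv ≫ (psiV ▷ V) ≫ phi A mu (sigV ≫ tmap A mu g)) =
        (α_ V A (A ⊗ V)).hom ≫ (V ◁ ((α_ A A V).inv ≫ (mu ▷ V))) ≫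
          (α_ V A V).inv ≫ (psiV ▷ V) ≫ phi A mu (sigV ≫ tmap A mu g) := by
      rw [Mass hA hmV (sigV ≫ tmap A mu g)]
      simp
    rw [hMass']
    rw [associator_naturality_right_assoc]
    simp only [Category.assoc, Iso.inv_hom_id_assoc]
    have hpack : (V ◁ g) ≫ (V ◁ (A ◁ th)) ≫ (V ◁ ((α_ A A V).inv ≫ (mu ▷ V))) =
        V ◁ (g ≫ tmap A mu th) := by
      simp [tmap, MonoidalCategory.whiskerLeft_comp]
    rw [reassoc_of% hpack]
    rw [h5]
    rw [← phi_tmap hA]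
    rw [reassoc_of% (M3gen hA htwV hnsV)]
  have part4 : prodAV A V mu psiV sigV ≫ tmap A mu g =
      (tmap A mu g ⊗ₘ tmap A mu g) ≫ prodAV A W mu psiW sigW := by
    rw [prodAV_eq_phi hA psiV sigV, prodAV_eq_phi hA psiW sigW, MonoidalCategory.tensorHom_def]
    simp only [Category.assoc]
    rw [whisker_phi]
    rw [hPhiInner]
    rw [← comp_whiskerRight_assoc (tmap A mu g) (tmap A mu th)]
    rw [part5]
    rw [M2gen hA hmV]
    rw [phi_tmap hA]
    congr 1
    simp only [Category.assoc]
    rw [phi_tmap hA]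
    conv_lhs => rw [← hdia]
  exact ⟨tmap_lin hA g, tmap_lin hA th, part3, part4, part5, part6⟩

end WeakCrossed
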